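/- Let f : M → N be a short (1-Lipschitz) volume-preserving map between n-dimensional Riemannian manifolds (viewed as metric measure spaces). Then f is injective. -/

import Mathlib

open MeasureTheory

/-- A metric space is an `n`-dimensional Riemannian space if every point admits, for every
`ε > 0`, an `e^{∓ε}`-bilipschitz chart onto an open subset of `n`-dimensional Euclidean
space. (This is the key property of Riemannian spaces with continuous metric tensor.) -/
def IsRiemannianSpace (n : ℕ) (M : Type*) [MetricSpace M] : Prop :=
  ∀ p : M, ∀ ε : ℝ, 0 < ε →
    ∃ (U : Set M) (φ : M → EuclideanSpace ℝ (Fin n)),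
      IsOpen U ∧ p ∈ U ∧ IsOpen (φ '' U) ∧
      ∀ x ∈ U, ∀ y ∈ U,
        dist x y / Real.exp ε ≤ dist (φ x) (φ y) ∧
        dist (φ x) (φ y) ≤ dist x y * Real.exp ε

/-- The Riemannian volume of an `n`-dimensional Riemannian space, as a metric measure:
`vol_n = (ω_n / 2ⁿ) · H^n`, where `ω_n` is the Euclidean volume of the unit `n`-ball. -/
noncomputable def riemVolume (n : ℕ) (M : Type*) [MetricSpace M] [MeasurableSpace M]
    [BorelSpace M] : Measure M :=
  (volume (Metric.closedBall (0 : EuclideanSpace ℝ (Fin n)) 1) / 2 ^ n) • μH[(n : ℝ)]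

open Metric
open scoped ENNReal NNReal

lemma euclid_haar (n : ℕ) :
    (μH[(n:ℝ)] : Measure (EuclideanSpace ℝ (Fin n))).IsAddHaarMeasure := by
  have h : (n:ℝ) = (Module.finrank ℝ (EuclideanSpace ℝ (Fin n)) : ℝ) := by simp
  rw [h]; infer_instance

lemma hK_eq (n : ℕ) {L : ℝ} (hL : 0 < L) :
    ((Real.toNNReal L : ℝ≥0∞)) ^ (n:ℝ) = ENNReal.ofReal (L ^ n) := by
  rw [ENNReal.rpow_natCast, ← ENNReal.coe_pow, ← Real.toNNReal_pow hL.le]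
  rfl

lemma ball_bounds (n : ℕ) {M : Type*} [MetricSpace M] [MeasurableSpace M] [BorelSpace M]
    (hM : IsRiemannianSpace n M) (p : M) {ε : ℝ} (hε : 0 < ε) :
    ∃ r0 > 0, ∀ r : ℝ, 0 < r → r ≤ r0 →
      (ENNReal.ofReal ((r / Real.exp ε) ^ n) *
          μH[(n:ℝ)] (ball (0 : EuclideanSpace ℝ (Fin n)) 1) ≤
        ENNReal.ofReal (Real.exp ε ^ n) * μH[(n:ℝ)] (ball p r)) ∧
      μH[(n:ℝ)] (ball p r) ≤ ENNReal.ofReal (Real.exp ε ^ n) *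
        (ENNReal.ofReal ((r * Real.exp ε) ^ n) *
          μH[(n:ℝ)] (ball (0 : EuclideanSpace ℝ (Fin n)) 1)) := by
  haveI := euclid_haar n
  haveI : Nonempty M := ⟨p⟩
  set L := Real.exp ε with hLdef
  have hL : 0 < L := Real.exp_pos ε
  obtain ⟨U, φ, hUopen, hpU, hVopen, hchart⟩ := hM p ε hε
  obtain ⟨r1, hr1, hr1U⟩ := Metric.isOpen_iff.1 hUopen p hpU
  obtain ⟨ρ, hρ, hρV⟩ := Metric.isOpen_iff.1 hVopen (φ p) ⟨p, hpU, rfl⟩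
  refine ⟨min r1 (ρ * L), lt_min hr1 (by positivity), fun r hr hrle => ?_⟩
  have hballU : ball p r ⊆ U := fun w hw => hr1U (lt_of_lt_of_le hw (hrle.trans (min_le_left _ _)))
  have hrρ : r / L ≤ ρ := by
    rw [div_le_iff₀ hL]
    calc r ≤ ρ * L := hrle.trans (min_le_right _ _)
    _ = L * ρ := mul_comm _ _
    _ ≤ ρ * L := by rw [mul_comm]
  have hωball : ∀ s : ℝ, 0 < s → μH[(n:ℝ)] (ball (φ p) s)
      = ENNReal.ofReal (s ^ n) * μH[(n:ℝ)] (ball (0 : EuclideanSpace ℝ (Fin n)) 1) := by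
    intro s hs
    have := Measure.addHaar_ball_of_pos (μH[(n:ℝ)] : Measure (EuclideanSpace ℝ (Fin n))) (φ p) hs
    simpa using this
  have hφlip : LipschitzOnWith (Real.toNNReal L) φ U := by
    apply LipschitzOnWith.of_dist_le_mul
    intro a ha b hb
    rw [Real.coe_toNNReal _ hL.le, mul_comm]
    exact (hchart a ha b hb).2
  constructor
  · -- lower bound
    have hsub : ball (φ p) (r / L) ⊆ φ '' (ball p r) := by
      intro z hz
      obtain ⟨w, hwU, rfl⟩ := hρV (lt_of_lt_of_le hz hrρ)
      refine ⟨w, ?_, rfl⟩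
      have h1 := (hchart p hpU w hwU).1
      rw [mem_ball, dist_comm]
      calc dist p w ≤ dist (φ p) (φ w) * L := by
            rw [← div_le_iff₀ hL]; exact h1
        _ < (r / L) * L := by
            apply mul_lt_mul_of_pos_right _ hL
            rwa [mem_ball, dist_comm] at hz
        _ = r := div_mul_cancel₀ r hL.ne'
    calc ENNReal.ofReal ((r / L) ^ n) * μH[(n:ℝ)] (ball (0 : EuclideanSpace ℝ (Fin n)) 1)
        = μH[(n:ℝ)] (ball (φ p) (r / L)) := (hωball _ (by positivity)).symm
      _ ≤ μH[(n:ℝ)] (φ '' (ball p r)) := measure_mono hsub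
      _ ≤ (Real.toNNReal L : ℝ≥0∞) ^ (n:ℝ) * μH[(n:ℝ)] (ball p r) :=
          (hφlip.mono hballU).hausdorffMeasure_image_le (Nat.cast_nonneg n)
      _ = ENNReal.ofReal (L ^ n) * μH[(n:ℝ)] (ball p r) := by rw [hK_eq n hL]
  · -- upper bound
    set g := Function.invFunOn φ U with hg
    have hginv : ∀ a ∈ U, g (φ a) = a := by
      intro a ha
      have hmem : ∃ b ∈ U, φ b = φ a := ⟨a, ha, rfl⟩
      have h1 : g (φ a) ∈ U := Function.invFunOn_mem hmem
      have h2 : φ (g (φ a)) = φ a := Function.invFunOn_eq hmem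
      have h3 := (hchart a ha (g (φ a)) h1).1
      rw [h2, dist_self] at h3
      have h4 : dist a (g (φ a)) ≤ 0 := by
        have h5 := mul_le_mul_of_nonneg_right h3 hL.le
        rwa [div_mul_cancel₀ _ hL.ne', zero_mul] at h5
      exact (eq_of_dist_eq_zero (le_antisymm h4 dist_nonneg)).symm
    have himg : ball p r ⊆ g '' (φ '' (ball p r)) := fun a ha =>
      ⟨φ a, Set.mem_image_of_mem _ ha, hginv a (hballU ha)⟩
    have hglip : LipschitzOnWith (Real.toNNReal L) g (φ '' (ball p r)) := by
      apply LipschitzOnWith.of_dist_le_mul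
      rintro _ ⟨a, ha, rfl⟩ _ ⟨b, hb, rfl⟩
      rw [hginv a (hballU ha), hginv b (hballU hb), Real.coe_toNNReal _ hL.le]
      have h1 := (hchart a (hballU ha) b (hballU hb)).1
      rw [div_le_iff₀ hL] at h1
      rw [mul_comm]
      exact h1
    have hsub2 : φ '' (ball p r) ⊆ ball (φ p) (r * L) := by
      rintro _ ⟨a, ha, rfl⟩
      rw [mem_ball]
      calc dist (φ a) (φ p) ≤ dist a p * L := (hchart a (hballU ha) p hpU).2
        _ < r * L := mul_lt_mul_of_pos_right (mem_ball.1 ha) hL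
    calc μH[(n:ℝ)] (ball p r) ≤ μH[(n:ℝ)] (g '' (φ '' (ball p r))) := measure_mono himg
      _ ≤ (Real.toNNReal L : ℝ≥0∞) ^ (n:ℝ) * μH[(n:ℝ)] (φ '' (ball p r)) :=
          hglip.hausdorffMeasure_image_le (Nat.cast_nonneg n)
      _ ≤ ENNReal.ofReal (L ^ n) * (ENNReal.ofReal ((r * L) ^ n) *
            μH[(n:ℝ)] (ball (0 : EuclideanSpace ℝ (Fin n)) 1)) := by
          rw [hK_eq n hL, ← hωball _ (by positivity)]
          exact mul_le_mul_right (measure_mono hsub2) _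

/-- **Short volume-preserving maps are injective.** A short (`1`-Lipschitz) volume-preserving
map `f : M → N` between `n`-dimensional Riemannian spaces is injective. -/
theorem injective_of_short_volume_preserving
    (n : ℕ) {M N : Type*}
    [MetricSpace M] [MeasurableSpace M] [BorelSpace M]
    [MetricSpace N] [MeasurableSpace N] [BorelSpace N]
    (hM : IsRiemannianSpace n M) (hN : IsRiemannianSpace n N)
    (f : M → N) (hshort : LipschitzWith 1 f)
    (hvol : ∀ B : Set N, MeasurableSet B →
      riemVolume n M (f ⁻¹' B) = riemVolume n N B) :
    Function.Injective f := by
  intro x y hfxy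
  by_contra hne
  haveI := euclid_haar n
  set L := Real.exp (Real.log 2 / (4 * n + 1)) with hLdef
  have hε : (0:ℝ) < Real.log 2 / (4 * n + 1) :=
    div_pos (Real.log_pos one_lt_two) (by positivity)
  have hL : 0 < L := Real.exp_pos _
  obtain ⟨rx, hrx, hbx⟩ := ball_bounds n hM x hε
  obtain ⟨ry, hry, hby⟩ := ball_bounds n hM y hε
  obtain ⟨rp, hrp, hbp⟩ := ball_bounds n hN (f x) hε
  have hd : 0 < dist x y := dist_pos.mpr hne
  set r := min (min rx ry) (min rp (dist x y / 2)) with hrdef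
  have hr : 0 < r := lt_min (lt_min hrx hry) (lt_min hrp (by positivity))
  have h1 := (hbx r hr ((min_le_left _ _).trans (min_le_left _ _))).1
  have h2 := (hby r hr ((min_le_left _ _).trans (min_le_right _ _))).1
  have h3 := (hbp r hr ((min_le_right _ _).trans (min_le_left _ _))).2
  have hdisj : Disjoint (ball x r) (ball y r) := by
    apply ball_disjoint_ball
    have : r ≤ dist x y / 2 := (min_le_right _ _).trans (min_le_right _ _)
    linarith
  have hsub : ball x r ∪ ball y r ⊆ f ⁻¹' ball (f x) r := by
    rintro w (hw | hw)
    · have := hshort.dist_le_mul w x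
      simp only [NNReal.coe_one, one_mul] at this
      exact mem_ball.2 (lt_of_le_of_lt this hw)
    · have := hshort.dist_le_mul w y
      simp only [NNReal.coe_one, one_mul] at this
      have : dist (f w) (f x) < r := by rw [hfxy]; exact lt_of_le_of_lt this hw
      exact this
  have hAsum : μH[(n:ℝ)] (ball x r) + μH[(n:ℝ)] (ball y r)
      ≤ μH[(n:ℝ)] (f ⁻¹' ball (f x) r) := by
    rw [← measure_union hdisj measurableSet_ball]
    exact measure_mono hsub
  have heq : μH[(n:ℝ)] (f ⁻¹' ball (f x) r) = μH[(n:ℝ)] (ball (f x) r) := by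
    have h := hvol (ball (f x) r) measurableSet_ball
    simp only [riemVolume, Measure.smul_apply, smul_eq_mul] at h
    set c := volume (Metric.closedBall (0 : EuclideanSpace ℝ (Fin n)) 1) / 2 ^ n with hc
    have hc0 : c ≠ 0 := by
      rw [hc]
      refine ENNReal.div_ne_zero.2 ⟨(measure_closedBall_pos volume 0 one_pos).ne', ?_⟩
      exact (ENNReal.pow_lt_top (by norm_num)).ne
    have hctop : c ≠ ∞ := by
      rw [hc]
      exact (ENNReal.div_lt_top ((isCompact_closedBall _ _).measure_lt_top).ne
        (by positivity)).ne
    exact le_antisymm ((ENNReal.mul_le_mul_iff_right hc0 hctop).1 h.le)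
      ((ENNReal.mul_le_mul_iff_right hc0 hctop).1 h.ge)
  set ω := μH[(n:ℝ)] (ball (0 : EuclideanSpace ℝ (Fin n)) 1) with hω
  have hω0 : ω ≠ 0 := (measure_ball_pos _ 0 one_pos).ne'
  have hωtop : ω ≠ ∞ := measure_ball_lt_top.ne
  have hchain : ENNReal.ofReal (2 * (r / L) ^ n) * ω
      ≤ ENNReal.ofReal (L ^ n * (L ^ n * (r * L) ^ n)) * ω := by
    calc ENNReal.ofReal (2 * (r / L) ^ n) * ω
        = ENNReal.ofReal ((r / L) ^ n) * ω + ENNReal.ofReal ((r / L) ^ n) * ω := by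
          rw [← two_mul, ← mul_assoc, ← ENNReal.ofReal_ofNat, ← ENNReal.ofReal_mul (by norm_num)]
      _ ≤ ENNReal.ofReal (L ^ n) * μH[(n:ℝ)] (ball x r)
          + ENNReal.ofReal (L ^ n) * μH[(n:ℝ)] (ball y r) := add_le_add h1 h2
      _ = ENNReal.ofReal (L ^ n) * (μH[(n:ℝ)] (ball x r) + μH[(n:ℝ)] (ball y r)) := by
          rw [mul_add]
      _ ≤ ENNReal.ofReal (L ^ n) * μH[(n:ℝ)] (f ⁻¹' ball (f x) r) :=
          mul_le_mul_right hAsum _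
      _ = ENNReal.ofReal (L ^ n) * μH[(n:ℝ)] (ball (f x) r) := by rw [heq]
      _ ≤ ENNReal.ofReal (L ^ n) * (ENNReal.ofReal (L ^ n) * (ENNReal.ofReal ((r * L) ^ n) * ω)) :=
          mul_le_mul_right h3 _
      _ = ENNReal.ofReal (L ^ n * (L ^ n * (r * L) ^ n)) * ω := by
          rw [ENNReal.ofReal_mul (by positivity), ENNReal.ofReal_mul (by positivity),
            mul_assoc, mul_assoc]
  rw [ENNReal.mul_le_mul_iff_left hω0 hωtop,
    ENNReal.ofReal_le_ofReal_iff (by positivity)] at hchain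
  have hrn : (0:ℝ) < r ^ n := by positivity
  have hLn : (0:ℝ) < L ^ n := by positivity
  have hfinal : (2:ℝ) ≤ L ^ (4 * n) := by
    have hc : 2 * (r ^ n / L ^ n) ≤ L ^ n * (L ^ n * (r ^ n * L ^ n)) := by
      rw [← div_pow, ← mul_pow]; exact hchain
    rw [div_eq_mul_inv] at hc
    have h5 := mul_le_mul_of_nonneg_right hc hLn.le
    have e1 : 2 * (r ^ n * (L ^ n)⁻¹) * L ^ n = 2 * r ^ n := by field_simp
    have e2 : L ^ n * (L ^ n * (r ^ n * L ^ n)) * L ^ n = r ^ n * L ^ (4 * n) := by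
      have h6 : L ^ (4 * n) = (L ^ n) ^ 4 := by rw [mul_comm, pow_mul]
      rw [h6]; ring
    rw [e1, e2] at h5
    nlinarith
  have hlt : L ^ (4 * n) < 2 := by
    have h8 : L ^ (4 * n) = Real.exp ((4 * n : ℕ) * (Real.log 2 / (4 * (n:ℝ) + 1))) := by
      rw [hLdef, ← Real.exp_nat_mul]
    have h9 : ((4 * n : ℕ) : ℝ) * (Real.log 2 / (4 * (n:ℝ) + 1)) < Real.log 2 := by
      push_cast
      rw [div_eq_mul_inv, ← mul_assoc]
      have h7 : (0:ℝ) < 4 * (n:ℝ) + 1 := by positivity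
      calc 4 * (n:ℝ) * Real.log 2 * (4 * (n:ℝ) + 1)⁻¹
          < (4 * (n:ℝ) + 1) * Real.log 2 * (4 * (n:ℝ) + 1)⁻¹ := by
            apply mul_lt_mul_of_pos_right _ (inv_pos.2 h7)
            apply mul_lt_mul_of_pos_right _ (Real.log_pos one_lt_two)
            linarith
        _ = Real.log 2 := by field_simp
    have h10 := Real.exp_lt_exp.2 h9
    rw [Real.exp_log two_pos] at h10
    rw [h8]
    exact h10
  linarith
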